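/- Let A be a finite-dimensional algebra over a field k and let 0 → M' → M → M'' → 0 be a non-split short exact sequence of finite-dimensional A-modules such that M' and M'' are indecomposable and Hom_A(M', M'') = 0. Then M is indecomposable. -/

import Mathlib

open LinearMap Submodule

private lemma idem_compl {A M : Type} [Ring A] [AddCommGroup M] [Module A M]
    (π : M →ₗ[A] M) (h : ∀ x, π (π x) = π x) :
    IsCompl (LinearMap.range π) (LinearMap.ker π) := by
  constructor
  · rw [Submodule.disjoint_def]
    rintro x ⟨y, rfl⟩ hx
    rw [LinearMap.mem_ker] at hx
    rw [← h y, hx]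
  · rw [codisjoint_iff, eq_top_iff]
    intro x _
    have hx : x = π x + (x - π x) := by abel
    rw [hx]
    exact Submodule.add_mem_sup ⟨x, rfl⟩ (by simp [LinearMap.mem_ker, map_sub, h])

private lemma idem_zero_or_id {A M : Type} [Ring A] [AddCommGroup M] [Module A M]
    (indec : ∀ N P : Submodule A M, IsCompl N P → N = ⊥ ∨ P = ⊥)
    (π : M →ₗ[A] M) (h : ∀ x, π (π x) = π x) :
    (∀ x, π x = 0) ∨ (∀ x, π x = x) := by
  rcases indec _ _ (idem_compl π h) with hr | hk
  · left
    intro x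
    have : π x ∈ LinearMap.range π := ⟨x, rfl⟩
    rw [hr] at this
    simpa using this
  · right
    intro x
    have : π x - x ∈ LinearMap.ker π := by
      simp [LinearMap.mem_ker, map_sub, h]
    rw [hk] at this
    exact sub_eq_zero.mp ((Submodule.mem_bot A).mp this)

private lemma mk_splitting {A M M'' : Type} [Ring A] [AddCommGroup M] [Module A M]
    [AddCommGroup M''] [Module A M'']
    (g : M →ₗ[A] M'') (hg : Function.Surjective g)
    (u : M →ₗ[A] M) (hker : LinearMap.ker g ≤ LinearMap.ker u)
    (hgu : ∀ x, g (u x) = g x) :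
    ∃ s : M'' →ₗ[A] M, g.comp s = LinearMap.id := by
  refine ⟨((LinearMap.ker g).liftQ u hker) ∘ₗ (g.quotKerEquivOfSurjective hg).symm.toLinearMap, ?_⟩
  ext y
  obtain ⟨x, rfl⟩ := hg y
  have hq : g.quotKerEquivOfSurjective hg (Submodule.Quotient.mk x) = g x := by
    simp [LinearMap.quotKerEquivOfSurjective, LinearMap.quotKerEquivRange_apply_mk]
  simp only [LinearMap.comp_apply, LinearMap.id_apply, LinearEquiv.coe_coe]
  rw [← hq, LinearEquiv.symm_apply_apply, Submodule.liftQ_apply, hgu]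
  rw [hq]


/-- A non-split extension of an indecomposable `M''` by an indecomposable `M'` with
`Hom_A(M', M'') = 0` is indecomposable. -/
theorem stmt_5 {k A : Type} [Field k] [Ring A] [Algebra k A] [FiniteDimensional k A]
    {M' M M'' : Type} [AddCommGroup M'] [AddCommGroup M] [AddCommGroup M'']
    [Module k M'] [Module k M] [Module k M'']
    [Module A M'] [Module A M] [Module A M'']
    [IsScalarTower k A M'] [IsScalarTower k A M] [IsScalarTower k A M'']
    [FiniteDimensional k M'] [FiniteDimensional k M] [FiniteDimensional k M'']
    (f : M' →ₗ[A] M) (g : M →ₗ[A] M'')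
    (hf : Function.Injective f) (hg : Function.Surjective g)
    (hexact : LinearMap.range f = LinearMap.ker g)
    (hnonsplit : ¬ ∃ s : M'' →ₗ[A] M, g.comp s = LinearMap.id)
    (hM'indec : (∃ x : M', x ≠ 0) ∧
      ∀ N P : Submodule A M', IsCompl N P → N = ⊥ ∨ P = ⊥)
    (hM''indec : (∃ x : M'', x ≠ 0) ∧
      ∀ N P : Submodule A M'', IsCompl N P → N = ⊥ ∨ P = ⊥)
    (hhom : ∀ h : M' →ₗ[A] M'', h = 0) :
    (∃ x : M, x ≠ 0) ∧ ∀ N P : Submodule A M, IsCompl N P → N = ⊥ ∨ P = ⊥ := by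
  obtain ⟨⟨x0, hx0⟩, hM'⟩ := hM'indec
  obtain ⟨_, hM''⟩ := hM''indec
  constructor
  · exact ⟨f x0, fun h => hx0 (hf (by simpa using h))⟩
  intro N P hNP
  set e : M →ₗ[A] M := N.subtype ∘ₗ N.projectionOnto P hNP with he
  have heN : ∀ x ∈ N, e x = x := by
    intro x hx
    simp [he, Submodule.projectionOnto_apply_of_mem_left hNP hx]
  have heP : ∀ x ∈ P, e x = 0 := by
    intro x hx
    simp [he, Submodule.projectionOnto_apply_of_mem_right hNP hx]
  have hee : ∀ x, e (e x) = e x := by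
    intro x
    exact heN _ (Submodule.coe_mem (N.projectionOnto P hNP x))
  -- e maps range f into range f
  have hmem : ∀ x : M', e (f x) ∈ LinearMap.range f := by
    intro x
    rw [hexact, LinearMap.mem_ker]
    have : g ∘ₗ e ∘ₗ f = 0 := hhom _
    exact congrFun (congrArg DFunLike.coe this) x
  -- e'
  set e' : M' →ₗ[A] M' :=
    (LinearEquiv.ofInjective f hf).symm ∘ₗ (e ∘ₗ f).codRestrict (LinearMap.range f) hmem
    with he'
  have hfe' : ∀ x, f (e' x) = e (f x) := by
    intro x
    have h1 := (LinearEquiv.ofInjective f hf).apply_symm_apply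
      (((e ∘ₗ f).codRestrict (LinearMap.range f) hmem) x)
    have h2 := congrArg Subtype.val h1
    rw [LinearEquiv.ofInjective_apply] at h2
    simpa [he'] using h2
  have he'idem : ∀ x, e' (e' x) = e' x := by
    intro x
    apply hf
    rw [hfe', hfe', hee]
  -- e''
  have hcomap : LinearMap.ker g ≤ Submodule.comap e (LinearMap.ker g) := by
    intro x hx
    rw [← hexact] at hx
    obtain ⟨y, rfl⟩ := hx
    have := hmem y
    rw [hexact] at this
    exact this
  set q := g.quotKerEquivOfSurjective hg with hq
  have hqmk : ∀ x : M, q (Submodule.Quotient.mk x) = g x := by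
    intro x
    simp [hq, LinearMap.quotKerEquivOfSurjective, LinearMap.quotKerEquivRange_apply_mk]
  set e'' : M'' →ₗ[A] M'' :=
    q.toLinearMap ∘ₗ (Submodule.mapQ _ _ e hcomap) ∘ₗ q.symm.toLinearMap with he''
  have hge'' : ∀ x, e'' (g x) = g (e x) := by
    intro x
    simp only [he'', LinearMap.comp_apply, LinearEquiv.coe_coe]
    rw [← hqmk x, LinearEquiv.symm_apply_apply, Submodule.mapQ_apply, hqmk]
  have he''idem : ∀ y, e'' (e'' y) = e'' y := by
    intro y
    obtain ⟨x, rfl⟩ := hg y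
    rw [hge'', hge'', hee]
  rcases idem_zero_or_id hM' e' he'idem with h1 | h1 <;>
    rcases idem_zero_or_id hM'' e'' he''idem with h2 | h2
  · -- e' = 0, e'' = 0 : e = 0, N = ⊥
    left
    have hezero : ∀ x, e x = 0 := by
      intro x
      have hx : e x ∈ LinearMap.range f := by
        rw [hexact, LinearMap.mem_ker, ← hge'', h2]
      obtain ⟨y, hy⟩ := hx
      have : e (e x) = 0 := by rw [← hy, ← hfe', h1, map_zero]
      rw [hee] at this
      exact this
    rw [eq_bot_iff]
    intro x hx
    rw [Submodule.mem_bot, ← heN x hx, hezero]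
  · -- e' = 0, e'' = id : splitting via e
    exfalso
    apply hnonsplit
    apply mk_splitting g hg e
    · intro x hx
      rw [← hexact] at hx
      obtain ⟨y, rfl⟩ := hx
      rw [LinearMap.mem_ker, ← hfe', h1, map_zero]
    · intro x
      rw [← hge'', h2]
  · -- e' = id, e'' = 0 : splitting via 1 - e
    exfalso
    apply hnonsplit
    apply mk_splitting g hg (LinearMap.id - e)
    · intro x hx
      rw [← hexact] at hx
      obtain ⟨y, rfl⟩ := hx
      rw [LinearMap.mem_ker]
      simp only [LinearMap.sub_apply, LinearMap.id_apply]
      rw [← hfe', h1, sub_self]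
    · intro x
      simp only [LinearMap.sub_apply, LinearMap.id_apply, map_sub]
      rw [← hge'', h2, sub_zero]
  · -- e' = id, e'' = id : e = id, P = ⊥
    right
    have heid : ∀ x, e x = x := by
      intro x
      have hx : x - e x ∈ LinearMap.range f := by
        rw [hexact, LinearMap.mem_ker, map_sub, ← hge'', h2, sub_self]
      obtain ⟨y, hy⟩ := hx
      have h3 : e (x - e x) = 0 := by rw [map_sub, hee, sub_self]
      have h4 : e (x - e x) = f y := by rw [← hy, ← hfe', h1]
      have : f y = 0 := by rw [← h4, h3]
      have hy0 : y = 0 := hf (by simpa using this)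
      rw [hy0, map_zero] at hy
      exact (sub_eq_zero.mp hy.symm).symm
    rw [eq_bot_iff]
    intro x hx
    rw [Submodule.mem_bot, ← heid x, heP x hx]
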